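/- The pair (ℚ ⋊ ℚ₊*, P ⋊ ℕ×) is not a quasi-lattice ordered group: there exist two elements of P ⋊ ℕ× with a common upper bound in P ⋊ ℕ× but no least common upper bound. -/
import Mathlib


def Pset : Set ℕ := {n | n = 0 ∨ 2 ≤ n}

def valid (p : ℕ × ℕ) : Prop := p.1 ∈ Pset ∧ 0 < p.2

def smul' (p q : ℕ × ℕ) : ℕ × ℕ := (p.1 + p.2 * q.1, p.2 * q.2)

/-- g ≤ h iff g⁻¹h ∈ P ⋊ ℕ×, i.e. h = g·x for some x ∈ P ⋊ ℕ× -/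
def le' (p q : ℕ × ℕ) : Prop := ∃ r : ℕ × ℕ, valid r ∧ q = smul' p r

/-- (ℚ ⋊ ℚ₊*, P ⋊ ℕ×) is not quasi-lattice ordered: there are two elements of
P ⋊ ℕ× with a common upper bound in P ⋊ ℕ× but no least common upper bound. -/
theorem stmt12 :
    ∃ x y : ℕ × ℕ, valid x ∧ valid y ∧
      (∃ u : ℕ × ℕ, valid u ∧ le' x u ∧ le' y u) ∧
      ¬ ∃ u : ℕ × ℕ, valid u ∧ le' x u ∧ le' y u ∧
        ∀ w : ℕ × ℕ, valid w → le' x w → le' y w → le' u w := by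
  refine ⟨(2,1), (3,1), ⟨Or.inr (by norm_num), one_pos⟩, ⟨Or.inr (by norm_num), one_pos⟩,
    ⟨(5,1), ⟨Or.inr (by norm_num), one_pos⟩,
      ⟨(3,1), ⟨Or.inr (by norm_num), one_pos⟩, by simp [smul']⟩,
      ⟨(2,1), ⟨Or.inr (by norm_num), one_pos⟩, by simp [smul']⟩⟩, ?_⟩
  rintro ⟨u, hu, ⟨r, hr, hxr⟩, ⟨s, hs, hys⟩, hmin⟩
  obtain ⟨t, ht, h5⟩ := hmin (5,1) ⟨Or.inr (by norm_num), one_pos⟩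
    ⟨(3,1), ⟨Or.inr (by norm_num), one_pos⟩, by simp [smul']⟩
    ⟨(2,1), ⟨Or.inr (by norm_num), one_pos⟩, by simp [smul']⟩
  obtain ⟨t', ht', h6⟩ := hmin (6,1) ⟨Or.inr (by norm_num), one_pos⟩
    ⟨(4,1), ⟨Or.inr (by norm_num), one_pos⟩, by simp [smul']⟩
    ⟨(3,1), ⟨Or.inr (by norm_num), one_pos⟩, by simp [smul']⟩
  simp only [smul', valid, Pset, Set.mem_setOf_eq, Prod.ext_iff, Prod.mk.injEq] at *
  have e1 : u.2 = 1 := Nat.eq_one_of_mul_eq_one_right h5.2.symm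
  rw [e1] at h5 h6
  omega
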